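/- In the ring R the identity x⁷ = 6s⁷t⁹·y + s⁶t⁹·y + 14s⁴t⁷·y + s²t⁵·y + 6st⁵·y + 8s³t⁶·x holds. -/

import Mathlib

/-!
The ring `R = ℤ[s^{±1}, t^{±1}, x, y] / (x³ = 2t²sx + t³s²y, xy = t³s³y + t⁵s⁶y, t⁶s⁸ = 1)`
is modeled as a quotient of the polynomial ring `ℤ[s, s', t, t', x, y]` (variables indexed by
`Fin 6`: `0 ↦ s`, `1 ↦ s⁻¹`, `2 ↦ t`, `3 ↦ t⁻¹`, `4 ↦ x`, `5 ↦ y`) by the ideal generated by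
`s·s' − 1`, `t·t' − 1` (making `s` and `t` invertible) and the three defining relations.
-/

open MvPolynomial

noncomputable section

def boRel : Ideal (MvPolynomial (Fin 6) ℤ) :=
  Ideal.span
    { X 0 * X 1 - 1,
      X 2 * X 3 - 1,
      X 4 ^ 3 - 2 * X 2 ^ 2 * X 0 * X 4 - X 2 ^ 3 * X 0 ^ 2 * X 5,
      X 4 * X 5 - X 2 ^ 3 * X 0 ^ 3 * X 5 - X 2 ^ 5 * X 0 ^ 6 * X 5,
      X 2 ^ 6 * X 0 ^ 8 - 1 }

def R : Type := MvPolynomial (Fin 6) ℤ ⧸ boRel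

instance : CommRing R := inferInstanceAs (CommRing (MvPolynomial (Fin 6) ℤ ⧸ boRel))

/-- the element `s` of `R` -/
def s : R := Ideal.Quotient.mk boRel (X 0)
/-- the element `s⁻¹` of `R` -/
def si : R := Ideal.Quotient.mk boRel (X 1)
/-- the element `t` of `R` -/
def t : R := Ideal.Quotient.mk boRel (X 2)
/-- the element `t⁻¹` of `R` -/
def ti : R := Ideal.Quotient.mk boRel (X 3)
/-- the element `x` of `R` -/
def x : R := Ideal.Quotient.mk boRel (X 4)
/-- the element `y` of `R` -/
def y : R := Ideal.Quotient.mk boRel (X 5)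

lemma mk_rel (p : MvPolynomial (Fin 6) ℤ)
    (hp : p ∈ ({ X 0 * X 1 - 1,
      X 2 * X 3 - 1,
      X 4 ^ 3 - 2 * X 2 ^ 2 * X 0 * X 4 - X 2 ^ 3 * X 0 ^ 2 * X 5,
      X 4 * X 5 - X 2 ^ 3 * X 0 ^ 3 * X 5 - X 2 ^ 5 * X 0 ^ 6 * X 5,
      X 2 ^ 6 * X 0 ^ 8 - 1 } : Set (MvPolynomial (Fin 6) ℤ))) :
    Ideal.Quotient.mk boRel p = 0 :=
  Ideal.Quotient.eq_zero_iff_mem.mpr (Ideal.subset_span hp)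

lemma h3 : x ^ 3 - 2 * t ^ 2 * s * x - t ^ 3 * s ^ 2 * y = 0 := by
  have := mk_rel (X 4 ^ 3 - 2 * X 2 ^ 2 * X 0 * X 4 - X 2 ^ 3 * X 0 ^ 2 * X 5) (by simp)
  simp only [map_sub, map_mul, map_pow, map_ofNat] at this
  exact this

lemma h4 : x * y - t ^ 3 * s ^ 3 * y - t ^ 5 * s ^ 6 * y = 0 := by
  have := mk_rel (X 4 * X 5 - X 2 ^ 3 * X 0 ^ 3 * X 5 - X 2 ^ 5 * X 0 ^ 6 * X 5) (by simp)
  simp only [map_sub, map_mul, map_pow] at this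
  exact this

lemma h5 : t ^ 6 * s ^ 8 - 1 = 0 := by
  have := mk_rel (X 2 ^ 6 * X 0 ^ 8 - 1) (by simp)
  simp only [map_sub, map_mul, map_pow, map_one] at this
  exact this

lemma hx4 : x ^ 4 = 2 * s * t ^ 2 * x ^ 2 + s ^ 5 * t ^ 6 * y + t ^ 2 * y := by
  linear_combination x * h3 + s ^ 2 * t ^ 3 * h4 + t ^ 2 * y * h5

lemma hx5 : x ^ 5 = 4 * s ^ 2 * t ^ 4 * x + 4 * s ^ 3 * t ^ 5 * y + t ^ 3 * y
    + s ^ 6 * t ^ 7 * y := by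
  linear_combination x * hx4 + 2 * s * t ^ 2 * h3 + (s ^ 5 * t ^ 6 + t ^ 2) * h4
    + (t ^ 3 + s ^ 3 * t ^ 5) * y * h5

lemma hx6 : x ^ 6 = 4 * s ^ 2 * t ^ 4 * x ^ 2 + 5 * s ^ 6 * t ^ 8 * y + s ^ 3 * t ^ 6 * y
    + 5 * s * t ^ 4 * y + s ^ 4 * t ^ 6 * y := by
  linear_combination x * hx5 + (4 * s ^ 3 * t ^ 5 + t ^ 3 + s ^ 6 * t ^ 7) * h4
    + (5 * s * t ^ 4 + s ^ 4 * t ^ 6) * y * h5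

/-- In the ring `R`, the identity `x⁷ = 6s⁷t⁹·y + s⁶t⁹·y + 14s⁴t⁷·y + s²t⁵·y + 6st⁵·y + 8s³t⁶·x` holds. -/
theorem x_pow_seven : x ^ 7 = 6 * s ^ 7 * t ^ 9 * y + s ^ 6 * t ^ 9 * y + 14 * s ^ 4 * t ^ 7 * y + s ^ 2 * t ^ 5 * y + 6 * s * t ^ 5 * y + 8 * s ^ 3 * t ^ 6 * x := by
  linear_combination x * hx6 + 4 * s ^ 2 * t ^ 4 * h3
    + (5 * s ^ 6 * t ^ 8 + s ^ 3 * t ^ 6 + 5 * s * t ^ 4 + s ^ 4 * t ^ 6) * h4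
    + (6 * s * t ^ 5 + 5 * s ^ 4 * t ^ 7 + s ^ 2 * t ^ 5) * y * h5

end
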